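/- Let G be a simple graph on vertex set {1,...,n}, π a permutation of {1,...,n}, and A ⊆ V with B = V \ A. Define f : V → ℝ by f(u) = n + π(u) if u ∈ B; f(u) = 0 if u ∈ A and N(u) ∩ B = ∅; and f(u) = max{π(x) : x ∈ N(u) ∩ B} if u ∈ A and N(u) ∩ B ≠ ∅. Let G' be the graph with edge set {(u,v) : u ≠ v, |f(u) - f(v)| ≤ n}. Then G' is a supergraph of G. -/
import Mathlib


/-- The construction `M(G, π, A)`: with `B = V \ A`, set `f u = n + π(u)` for `u ∈ B`,
`f u = 0` for `u ∈ A` with `N(u) ∩ B = ∅`, and `f u = max {π(x) : x ∈ N(u) ∩ B}` otherwise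
(here `π(u)` denotes the value in `{1,…,n}`).  The indifference graph `G'` with
`u ~ v ↔ u ≠ v ∧ |f u - f v| ≤ n` is a supergraph of `G`. -/
theorem stmt7 (n : ℕ) (G : SimpleGraph (Fin n)) [DecidableRel G.Adj]
    (π : Equiv.Perm (Fin n)) (A : Finset (Fin n)) (f : Fin n → ℝ)
    (hB : ∀ u, u ∉ A → f u = (n : ℝ) + ((π u : ℕ) + 1))
    (hA0 : ∀ u ∈ A, ((G.neighborFinset u).filter (· ∉ A)) = ∅ → f u = 0)
    (hAmax : ∀ u ∈ A, ∀ hne : ((G.neighborFinset u).filter (· ∉ A)).Nonempty,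
      f u = ((((G.neighborFinset u).filter (· ∉ A)).sup' hne fun x => (π x : ℕ) + 1 : ℕ) : ℝ)) :
    G ≤ SimpleGraph.fromRel (fun u w => |f u - f w| ≤ (n : ℝ)) := by
  have hπ : ∀ w : Fin n, ((π w : ℕ) + 1 : ℝ) ≤ (n : ℝ) := by
    intro w
    exact_mod_cast Nat.succ_le_of_lt (π w).isLt
  have hbound : ∀ w ∈ A, 0 ≤ f w ∧ f w ≤ (n : ℝ) := by
    intro w hw
    rcases eq_or_ne ((G.neighborFinset w).filter (· ∉ A)) ∅ with he | hne
    · rw [hA0 w hw he]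
      exact ⟨le_refl _, Nat.cast_nonneg n⟩
    · have hne' : ((G.neighborFinset w).filter (· ∉ A)).Nonempty :=
        Finset.nonempty_of_ne_empty hne
      rw [hAmax w hw hne']
      constructor
      · positivity
      · have := Finset.sup'_le hne' (fun x => (π x : ℕ) + 1)
          (fun x _ => Nat.succ_le_of_lt (π x).isLt)
        exact_mod_cast this
  -- key: if a ∈ A and b ∉ A are adjacent, then π b + 1 ≤ f a
  have hkey : ∀ a b : Fin n, G.Adj a b → a ∈ A → b ∉ A →
      ((π b : ℕ) + 1 : ℝ) ≤ f a ∧ |f a - f b| ≤ (n : ℝ) := by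
    intro a b hab ha hb
    have hbmem : b ∈ (G.neighborFinset a).filter (· ∉ A) := by
      simp [SimpleGraph.mem_neighborFinset, hab, hb]
    have hne : ((G.neighborFinset a).filter (· ∉ A)).Nonempty := ⟨b, hbmem⟩
    have hle : ((π b : ℕ) + 1 : ℝ) ≤ f a := by
      rw [hAmax a ha hne]
      exact_mod_cast Finset.le_sup' (fun x => (π x : ℕ) + 1) hbmem
    refine ⟨hle, ?_⟩
    rw [hB b hb, abs_sub_le_iff]
    constructor
    · have := (hbound a ha).2
      have h0 : (0:ℝ) ≤ (π b : ℕ) + 1 := by positivity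
      linarith
    · linarith
  intro u v huv
  simp only [SimpleGraph.fromRel_adj]
  refine ⟨G.ne_of_adj huv, Or.inl ?_⟩
  by_cases hu : u ∈ A <;> by_cases hv : v ∈ A
  · have h1 := hbound u hu
    have h2 := hbound v hv
    rw [abs_sub_le_iff]; constructor <;> linarith
  · exact (hkey u v huv hu hv).2
  · rw [abs_sub_comm]; exact (hkey v u huv.symm hv hu).2
  · rw [hB u hu, hB v hv]
    have h1 : (0:ℝ) ≤ (π u : ℕ) + 1 := by positivity
    have h2 : (0:ℝ) ≤ (π v : ℕ) + 1 := by positivity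
    have h3 := hπ u
    have h4 := hπ v
    rw [abs_sub_le_iff]; constructor <;> linarith
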